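/- The operators Δ_i = Σ_{j≠i} (x_i - x_j)^{-1}(1 - P_ij) pairwise commute: [Δ_i, Δ_k] = 0 for all i, k. -/
import Mathlib


open Finset

noncomputable section

/-- The open set of points with pairwise distinct coordinates. -/
def Omega (N : ℕ) : Set (Fin N → ℝ) := {x | Function.Injective x}

/-- The coordinate-swap (transposition) operator `P_{ij}`. -/
def Pswap {N : ℕ} (i j : Fin N) (f : (Fin N → ℝ) → ℝ) : (Fin N → ℝ) → ℝ :=
  fun x => f (x ∘ Equiv.swap i j)

/-- The difference operator `Δ_i = ∑_{j ≠ i} (x_i - x_j)⁻¹ (1 - P_{ij})`. -/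
def Delta {N : ℕ} (i : Fin N) (f : (Fin N → ℝ) → ℝ) : (Fin N → ℝ) → ℝ :=
  fun x => ∑ j ∈ Finset.univ.erase i, (f x - f (x ∘ Equiv.swap i j)) / (x i - x j)

/-- The partial derivative operator `∂_i`. -/
def pd {N : ℕ} (i : Fin N) (f : (Fin N → ℝ) → ℝ) : (Fin N → ℝ) → ℝ :=
  fun x => fderiv ℝ f x (Pi.single i 1)

/-- Multiplication by the `i`-th coordinate. -/
def xmul {N : ℕ} (i : Fin N) (f : (Fin N → ℝ) → ℝ) : (Fin N → ℝ) → ℝ :=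
  fun x => x i * f x

/-- The Dunkl operator `D_i = ∂_i + g Δ_i`. -/
def Dunkl {N : ℕ} (g : ℝ) (i : Fin N) (f : (Fin N → ℝ) → ℝ) : (Fin N → ℝ) → ℝ :=
  fun x => pd i f x + g * Delta i f x

/-- Single divided-difference term `∂_{ij} f = (f - P_{ij} f)/(x_i - x_j)`. -/
def Dq {N : ℕ} (i j : Fin N) (f : (Fin N → ℝ) → ℝ) : (Fin N → ℝ) → ℝ :=
  fun x => (f x - f (x ∘ Equiv.swap i j)) / (x i - x j)

lemma comp_swap' {N : ℕ} (x : Fin N → ℝ) (i j k m : Fin N) :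
    ((x ∘ ⇑(Equiv.swap i j)) ∘ ⇑(Equiv.swap k m)) = x ∘ ⇑(Equiv.swap i j * Equiv.swap k m) := rfl

lemma Dq_delta {N : ℕ} (i j k : Fin N) (f : (Fin N → ℝ) → ℝ) (x : Fin N → ℝ) :
    Dq i j (Delta k f) x = ∑ l ∈ Finset.univ.erase k, Dq i j (Dq k l f) x := by
  unfold Dq Delta
  rw [← Finset.sum_sub_distrib, Finset.sum_div]

lemma delta_delta {N : ℕ} (i k : Fin N) (f : (Fin N → ℝ) → ℝ) (x : Fin N → ℝ) :
    Delta i (Delta k f) x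
      = ∑ j ∈ Finset.univ.erase i, ∑ l ∈ Finset.univ.erase k, Dq i j (Dq k l f) x := by
  show (∑ j ∈ Finset.univ.erase i, Dq i j (Delta k f) x) = _
  exact Finset.sum_congr rfl fun j _ => Dq_delta i j k f x

lemma swap_helper {N : ℕ} (a b c : Fin N) (hab : a ≠ b) (hac : a ≠ c) (hbc : b ≠ c) :
    (Equiv.swap a c * Equiv.swap a b : Equiv.Perm (Fin N)) = Equiv.swap a b * Equiv.swap b c := by
  ext t
  rcases eq_or_ne t a with rfl | hta
  · simp [Equiv.swap_apply_of_ne_of_ne, hab, hac, hbc,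
      Equiv.swap_apply_of_ne_of_ne hab.symm hbc]
  rcases eq_or_ne t b with rfl | htb
  · simp [Equiv.swap_apply_left, Equiv.swap_apply_right,
      Equiv.swap_apply_of_ne_of_ne hac.symm hbc.symm]
  rcases eq_or_ne t c with rfl | htc
  · simp [Equiv.swap_apply_of_ne_of_ne hac.symm hbc.symm]
  · simp [Equiv.swap_apply_of_ne_of_ne hta htb, Equiv.swap_apply_of_ne_of_ne hta htc,
      Equiv.swap_apply_of_ne_of_ne htb htc]

lemma zero_disjoint {N : ℕ} (x : Fin N → ℝ) (f : (Fin N → ℝ) → ℝ)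
    (i j k l : Fin N) (hik : i ≠ k) (hil : i ≠ l) (hjk : j ≠ k) (hjl : j ≠ l) :
    Dq i j (Dq k l f) x = Dq k l (Dq i j f) x := by
  have hswap : (Equiv.swap i j * Equiv.swap k l : Equiv.Perm (Fin N))
      = Equiv.swap k l * Equiv.swap i j := by
    ext t
    simp only [Equiv.Perm.mul_apply, Equiv.swap_apply_def]
    split_ifs <;> simp_all
  simp only [Dq, comp_swap', hswap, Function.comp_apply,
    Equiv.swap_apply_of_ne_of_ne hik.symm hjk.symm,
    Equiv.swap_apply_of_ne_of_ne hil.symm hjl.symm,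
    Equiv.swap_apply_of_ne_of_ne hik hil,
    Equiv.swap_apply_of_ne_of_ne hjk hjl]
  ring

lemma zero_ki {N : ℕ} (x : Fin N → ℝ) (hx : Function.Injective x)
    (f : (Fin N → ℝ) → ℝ) (i k : Fin N) (hik : i ≠ k) :
    Dq i k (Dq k i f) x = Dq k i (Dq i k f) x := by
  have h1 : x i - x k ≠ 0 := sub_ne_zero.mpr fun h => hik (hx h)
  have h2 : x k - x i ≠ 0 := sub_ne_zero.mpr fun h => hik (hx h).symm
  have hcomp : (x ∘ ⇑(Equiv.swap i k)) ∘ ⇑(Equiv.swap i k) = x := by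
    funext t
    simp [Function.comp, Equiv.swap_apply_self]
  simp only [Dq, Equiv.swap_comm k i, hcomp, Function.comp_apply,
    Equiv.swap_apply_left, Equiv.swap_apply_right]
  field_simp
  ring

lemma zero_triple {N : ℕ} (x : Fin N → ℝ) (hx : Function.Injective x)
    (f : (Fin N → ℝ) → ℝ) (i k m : Fin N) (hik : i ≠ k) (him : i ≠ m) (hkm : k ≠ m) :
    Dq i k (Dq k m f) x - Dq k m (Dq i k f) x
      + ((Dq i m (Dq k i f) x - Dq k i (Dq i m f) x)
      + (Dq i m (Dq k m f) x - Dq k m (Dq i m f) x)) = 0 := by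
  have pA : (Equiv.swap i m * Equiv.swap i k : Equiv.Perm (Fin N))
      = Equiv.swap i k * Equiv.swap k m := swap_helper i k m hik him hkm
  have pB : (Equiv.swap i k * Equiv.swap i m : Equiv.Perm (Fin N))
      = Equiv.swap k m * Equiv.swap i k := by
    have h := congrArg Inv.inv pA
    simpa [mul_inv_rev] using h
  have pC : (Equiv.swap i m * Equiv.swap k m : Equiv.Perm (Fin N))
      = Equiv.swap k m * Equiv.swap i k := by
    have h := swap_helper m k i hkm.symm him.symm hik.symm
    rw [Equiv.swap_comm m i, Equiv.swap_comm m k, Equiv.swap_comm k i] at h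
    exact h
  have pD : (Equiv.swap k m * Equiv.swap i m : Equiv.Perm (Fin N))
      = Equiv.swap i k * Equiv.swap k m := by
    have h := congrArg Inv.inv pC
    simpa [mul_inv_rev] using h
  have h1 : x i - x k ≠ 0 := sub_ne_zero.mpr fun h => hik (hx h)
  have h2 : x k - x i ≠ 0 := sub_ne_zero.mpr fun h => hik (hx h).symm
  have h3 : x i - x m ≠ 0 := sub_ne_zero.mpr fun h => him (hx h)
  have h4 : x m - x i ≠ 0 := sub_ne_zero.mpr fun h => him (hx h).symm
  have h5 : x k - x m ≠ 0 := sub_ne_zero.mpr fun h => hkm (hx h)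
  have h6 : x m - x k ≠ 0 := sub_ne_zero.mpr fun h => hkm (hx h).symm
  simp only [Dq, Equiv.swap_comm k i, comp_swap', pA, pB, pC, pD, Function.comp_apply,
    Equiv.swap_apply_left, Equiv.swap_apply_right,
    Equiv.swap_apply_of_ne_of_ne him.symm hkm.symm,
    Equiv.swap_apply_of_ne_of_ne hik.symm hkm,
    Equiv.swap_apply_of_ne_of_ne hik him]
  field_simp
  ring

lemma sum_partition {N : ℕ} (i k : Fin N) (hik : i ≠ k) (D : Fin N → Fin N → ℝ)
    (hdisj : ∀ j ∈ (Finset.univ.erase i).erase k, ∀ l ∈ (Finset.univ.erase i).erase k,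
      j ≠ l → D j l = 0)
    (hki0 : D k i = 0)
    (htriple : ∀ m ∈ (Finset.univ.erase i).erase k, D k m + (D m i + D m m) = 0) :
    ∑ j ∈ Finset.univ.erase i, ∑ l ∈ Finset.univ.erase k, D j l = 0 := by
  have hki : k ∈ Finset.univ.erase i := Finset.mem_erase.mpr ⟨hik.symm, Finset.mem_univ k⟩
  have hik' : i ∈ Finset.univ.erase k := Finset.mem_erase.mpr ⟨hik, Finset.mem_univ i⟩
  set T : Finset (Fin N) := (Finset.univ.erase i).erase k with hT
  have hTk : (Finset.univ.erase k).erase i = T := Finset.erase_right_comm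
  have hsplit : ∀ j, (∑ l ∈ Finset.univ.erase k, D j l) = D j i + ∑ l ∈ T, D j l := by
    intro j
    rw [← Finset.add_sum_erase _ _ hik', hTk]
  have hTsub : ∀ j ∈ T, (∑ l ∈ Finset.univ.erase k, D j l) = D j i + D j j := by
    intro j hj
    rw [hsplit j]
    congr 1
    exact Finset.sum_eq_single_of_mem j hj fun l hl hlj => hdisj j hj l hl (fun h => hlj h.symm)
  rw [← Finset.add_sum_erase _ _ hki, hsplit k, Finset.sum_congr rfl hTsub, hki0, zero_add,
    add_comm, ← Finset.sum_add_distrib]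
  apply Finset.sum_eq_zero
  intro m hm
  have := htriple m hm
  linarith

theorem Delta_comm {N : ℕ} (i k : Fin N)
    (f : (Fin N → ℝ) → ℝ) (x : Fin N → ℝ) (hx : x ∈ Omega N) :
    Delta i (Delta k f) x = Delta k (Delta i f) x := by
  rcases eq_or_ne i k with rfl | hik
  · rfl
  have hxi : Function.Injective x := hx
  rw [delta_delta, delta_delta, Finset.sum_comm, ← sub_eq_zero, ← Finset.sum_sub_distrib]
  simp_rw [← Finset.sum_sub_distrib]
  rw [Finset.sum_comm]
  refine sum_partition i k hik (fun j l => Dq i j (Dq k l f) x - Dq k l (Dq i j f) x) ?_ ?_ ?_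
  · intro j hj l hl hjl
    rw [Finset.mem_erase, Finset.mem_erase] at hj hl
    exact sub_eq_zero.mpr
      (zero_disjoint x f i j k l hik (fun h => hl.2.1 h.symm) hj.1 hjl)
  · exact sub_eq_zero.mpr (zero_ki x hxi f i k hik)
  · intro m hm
    rw [Finset.mem_erase, Finset.mem_erase] at hm
    exact zero_triple x hxi f i k m hik (fun h => hm.2.1 h.symm) (fun h => hm.1 h.symm)
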